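/- arXiv:1805.06305 — 2 statements merged into one kernel-verified Lean document; each statement's English description precedes it below -/
import Mathlib

section
/- For G = ℤ/Nℤ and σ the class of an integer k, the representation ring of Λ_G(σ) = (ℤ × ℝ)/(ℤ(N,0) + ℤ(k,1)) is isomorphic to ℤ[q^{±1}, x_k]/(x_k^N - q^k), where x_k is the character [a, t] ↦ e^{2πi(kt - a)/N} and q is pulled back along π([a,t]) = e^{2πit}. -/
/-!
STATEMENT 9: For G = ℤ/Nℤ and σ the class of k, the representation ring of
Λ_G(σ) = (ℤ × ℝ)/(ℤ(N,0) + ℤ(k,1)) is isomorphic to ℤ[q^{±1}, x_k]/(x_k^N - q^k),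
where x_k is the character [a,t] ↦ e^{2πi(kt-a)/N} and q([a,t]) = e^{2πit}.
The representation ring of this abelian group is modelled as the group ring of its
group of continuous circle-valued characters, and ℤ[q^{±1}, x]/(x^N - q^k) as the
quotient of a polynomial ring over Laurent polynomials.
-/

noncomputable section

/-- The group of continuous characters (values in the circle) of a topological group. -/
def contChars (M : Type*) [Group M] [TopologicalSpace M] : Subgroup (M →* Circle) where
  carrier := {χ | Continuous χ}
  one_mem' := by
    show Continuous fun x : M => (1 : M →* Circle) x
    simpa using (continuous_const : Continuous fun _ : M => (1 : Circle))
  mul_mem' := by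
    intro a b ha hb
    show Continuous fun x : M => (a * b) x
    simp only [MonoidHom.mul_apply]
    exact ha.mul hb
  inv_mem' := by
    intro a ha
    show Continuous fun x : M => a⁻¹ x
    simp only [MonoidHom.inv_apply]
    exact ha.inv

/-- The "representation ring" of an abelian compact group, modelled as the group ring of
its group of continuous characters. -/
abbrev RepRing (M : Type*) [Group M] [TopologicalSpace M] : Type _ :=
  MonoidAlgebra ℤ (contChars M)

/-- The ideal `(x^N - q^k)` in `ℤ[q^{±1}][x]`. -/
abbrev relIdeal (N : ℕ) (k : ℤ) : Ideal (Polynomial (LaurentPolynomial ℤ)) :=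
  Ideal.span {(Polynomial.X : Polynomial (LaurentPolynomial ℤ)) ^ N -
    Polynomial.C (LaurentPolynomial.T k)}

/-- `Λ_{ℤ/Nℤ}(σ) = (ℤ × ℝ)/(ℤ(N,0) + ℤ(k,1))`. -/
abbrev LamZN (N : ℕ) (k : ℤ) : Type :=
  (ℤ × ℝ) ⧸ (AddSubgroup.closure {((N : ℤ), (0 : ℝ)), (k, (1 : ℝ))})

namespace Stmt9

open Complex intervalIntegral

/-! ### Analysis: classification of continuous characters of ℝ -/

lemma exists_exp_of_hom (f : ℝ → ℂ) (hcont : Continuous f)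
    (hmul : ∀ s t : ℝ, f (s + t) = f s * f t) (h0 : f 0 = 1)
    (habs : ∀ t, ‖f t‖ = 1) :
    ∃ c : ℝ, ∀ t, f t = Complex.exp ((c * t) * Complex.I) := by
  set F : ℝ → ℂ := fun x => ∫ s in (0:ℝ)..x, f s with hFdef
  have hFd : ∀ x, HasDerivAt F (f x) x := fun x =>
    (hcont.integral_hasStrictDerivAt 0 x).hasDerivAt
  have hrex : ∃ r : ℝ, F r ≠ 0 := by
    by_contra h
    push_neg at h
    have hF0 : F = fun _ => (0:ℂ) := funext h
    have h1 : deriv F 1 = f 1 := (hFd 1).deriv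
    rw [hF0, deriv_const] at h1
    have := habs 1
    rw [← h1] at this
    simp at this
  obtain ⟨r, hA⟩ := hrex
  set A : ℂ := F r with hAdef
  have hint : ∀ a b : ℝ, IntervalIntegrable f MeasureTheory.volume a b :=
    fun a b => hcont.intervalIntegrable a b
  have key : ∀ t : ℝ, f t * A = F (t + r) - F t := by
    intro t
    have h1 : F (t + r) - F t = ∫ s in t..(t+r), f s := by
      have := integral_interval_sub_left (hint 0 (t+r)) (hint 0 t)
      rw [← this]
    have h2 : ∫ s in (0:ℝ)..r, f (t + s) = ∫ s in t..(t+r), f s := by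
      simpa using integral_comp_add_left (a := (0:ℝ)) (b := r) f t
    have h3 : ∫ s in (0:ℝ)..r, f (t + s) = f t * A := by
      simp_rw [hmul t]
      exact integral_const_mul (f t) f
    rw [h1, ← h2, h3]
  set a : ℂ := (f r - 1) * A⁻¹ with hadef
  have hd : ∀ t, HasDerivAt f (a * f t) t := by
    intro t
    have hfe : f = fun t => (F (t + r) - F t) * A⁻¹ := by
      funext t
      field_simp [← key t]
      exact key t
    have h1 : HasDerivAt (fun t : ℝ => F (t + r)) (f (r + t)) t := by
      have := (hFd (t + r)).comp_add_const t r
      simpa [add_comm] using this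
    have h2 : HasDerivAt (fun t : ℝ => (F (t + r) - F t) * A⁻¹)
        ((f (r + t) - f t) * A⁻¹) t := (h1.sub (hFd t)).mul_const A⁻¹
    rw [← hfe] at h2
    convert h2 using 1
    have : f (r + t) = f t * f r := by rw [mul_comm, ← hmul]
    rw [this, hadef]; ring
  have hexp : ∀ t : ℝ, HasDerivAt (fun t : ℝ => Complex.exp (-(a * t)))
      (Complex.exp (-(a * t)) * (-a)) t := by
    intro t
    have h1 : HasDerivAt (fun t : ℝ => -(a * (t:ℂ))) (-a) t := by
      simpa [Pi.neg_def] using ((Complex.ofRealCLM.hasDerivAt (x := t)).const_mul a).neg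
    exact h1.cexp
  have hg : ∀ t : ℝ, HasDerivAt (fun t : ℝ => f t * Complex.exp (-(a * t))) 0 t := by
    intro t
    have := (hd t).mul (hexp t)
    convert this using 1
    · rfl
    · rfl
    · ring
  have hgconst : ∀ t : ℝ, f t * Complex.exp (-(a * t)) = 1 := by
    intro t
    have := is_const_of_deriv_eq_zero (𝕜 := ℝ)
      (f := fun t : ℝ => f t * Complex.exp (-(a * t)))
      (fun x => (hg x).differentiableAt) (fun x => (hg x).deriv) t 0
    simpa [h0] using this
  have hfa : ∀ t : ℝ, f t = Complex.exp (a * t) := by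
    intro t
    have h := hgconst t
    have h2 : Complex.exp (-(a*t)) * Complex.exp (a*t) = 1 := by
      rw [← Complex.exp_add]; simp
    calc f t = f t * (Complex.exp (-(a*t)) * Complex.exp (a*t)) := by rw [h2, mul_one]
    _ = (f t * Complex.exp (-(a*t))) * Complex.exp (a*t) := by ring
    _ = Complex.exp (a * t) := by rw [h, one_mul]
  have hre : a.re = 0 := by
    have := habs 1
    rw [hfa 1, Complex.norm_exp] at this
    have h2 : (a * (1:ℝ)).re = 0 := by
      have h0' : Real.exp ((a * (1:ℝ)).re) = Real.exp 0 := by rw [Real.exp_zero]; exact this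
      exact Real.exp_injective h0'
    simpa using h2
  refine ⟨a.im, fun t => ?_⟩
  rw [hfa t]
  congr 1
  apply Complex.ext <;> simp [hre]

lemma circle_hom_exp (ψ : ℝ → Circle) (hcont : Continuous ψ)
    (hmul : ∀ s t, ψ (s + t) = ψ s * ψ t) :
    ∃ c : ℝ, ∀ t, ψ t = Circle.exp (c * t) := by
  have h0 : ψ 0 = 1 := by
    have h := hmul 0 0
    rw [add_zero] at h
    have : ψ 0 * ψ 0 = ψ 0 * 1 := by rw [mul_one, ← h]
    exact (mul_left_cancel this)
  have hcoe : Continuous fun t => ((ψ t : ℂ)) := continuous_induced_dom.comp hcont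
  obtain ⟨c, hc⟩ := exists_exp_of_hom (fun t => ((ψ t : ℂ))) hcoe
    (fun s t => by show ((ψ (s+t) : ℂ)) = _; rw [hmul]; push_cast; ring)
    (by show ((ψ 0 : ℂ)) = 1; rw [h0]; simp) (fun t => Circle.norm_coe _)
  refine ⟨c, fun t => ?_⟩
  apply Subtype.ext
  rw [hc t, Circle.coe_exp]
  push_cast
  ring_nf

/-! ### Construction of characters of `LamZN N k` -/

open Multiplicative

/-- the real-linear functional `(a,t) ↦ α t + β a` -/
def ell (α β : ℝ) : ℤ × ℝ →+ ℝ :=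
  AddMonoidHom.mk' (fun p => α * p.2 + β * (p.1 : ℝ)) (by
    intro p q
    simp only [Prod.fst_add, Prod.snd_add]
    push_cast
    ring)

variable (N : ℕ) (k : ℤ)

/-- character of `Multiplicative (LamZN N k)` from data `(α, β)` -/
lemma charOf_ker (α β : ℝ) (h1 : Circle.exp (β * N) = 1) (h2 : Circle.exp (α + β * k) = 1) :
    AddSubgroup.closure {((N : ℤ), (0 : ℝ)), (k, (1 : ℝ))} ≤
      (Circle.expHom.comp (ell α β)).ker := by
  rw [AddSubgroup.closure_le]
  · intro x hx
    simp only [Set.mem_insert_iff, Set.mem_singleton_iff] at hx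
    rcases hx with rfl | rfl <;>
      simp only [SetLike.mem_coe, AddMonoidHom.mem_ker, AddMonoidHom.comp_apply] <;>
      [skip; skip] <;>
      (show Additive.ofMul (Circle.exp _) = 0
       rw [show (0 : Additive Circle) = Additive.ofMul 1 from rfl]
       congr 1
       simp only [ell, AddMonoidHom.mk'_apply])
    · rw [← h1]; congr 1; push_cast; ring
    · rw [← h2]; congr 1; push_cast; ring

def charOf (α β : ℝ) (h1 : Circle.exp (β * N) = 1) (h2 : Circle.exp (α + β * k) = 1) :
    contChars (Multiplicative (LamZN N k)) :=
  ⟨AddMonoidHom.toMultiplicativeLeft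
    (QuotientAddGroup.lift _ (Circle.expHom.comp (ell α β)) (charOf_ker N k α β h1 h2)), by
    show Continuous fun x : Multiplicative (LamZN N k) => _
    apply continuous_coinduced_dom.mpr
    show Continuous fun p : ℤ × ℝ => Circle.exp (α * p.2 + β * (p.1 : ℝ))
    exact Circle.exp.continuous.comp (by fun_prop)⟩

lemma charOf_apply (α β : ℝ) (h1) (h2) (a : ℤ) (t : ℝ) :
    ((charOf N k α β h1 h2 : Multiplicative (LamZN N k) →* Circle))
      (Multiplicative.ofAdd (QuotientAddGroup.mk (a, t)))
      = Circle.exp (α * t + β * a) := rfl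



lemma mhom_zpow_apply {M : Type*} [Group M] (f : M →* Circle) (n : ℤ) (g : M) :
    (f^n) g = f g ^ n :=
  map_zpow (MonoidHom.eval g) f n

lemma mhom_mul_apply {M : Type*} [Group M] (f f' : M →* Circle) (g : M) :
    (f * f') g = f g * f' g := rfl

lemma circle_exp_zpow (x : ℝ) (m : ℤ) : Circle.exp x ^ m = Circle.exp (m * x) := by
  have h := map_zsmul Circle.expHom m x
  calc Circle.exp x ^ m = Additive.toMul (m • Circle.expHom x) := by rw [toMul_zsmul]; rfl
  _ = Additive.toMul (Circle.expHom (m • x)) := by rw [h]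
  _ = Circle.exp (m * x) := by rw [zsmul_eq_mul]; rfl

lemma circle_exp_npow (x : ℝ) (n : ℕ) : Circle.exp x ^ n = Circle.exp (n * x) := by
  have := circle_exp_zpow x (n : ℤ)
  rw [zpow_natCast] at this
  rw [this]
  norm_num

open Real in
/-- the character `x_k` -/
def xkChar (hN : 1 ≤ N) : contChars (Multiplicative (LamZN N k)) :=
  charOf N k (2 * π * k / N) (-(2 * π) / N)
    (by
      have hNne : (N:ℝ) ≠ 0 := Nat.cast_ne_zero.mpr (by omega)
      rw [show (-(2*π)/(N:ℝ)) * (N:ℝ) = ((-1 : ℤ) : ℝ) * (2*π) by push_cast; field_simp]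
      exact Circle.exp_int_mul_two_pi (-1))
    (by
      have hNne : (N:ℝ) ≠ 0 := Nat.cast_ne_zero.mpr (by omega)
      rw [show 2*π*(k:ℝ)/N + (-(2*π)/N)*k = (0:ℝ) by ring]
      exact Circle.exp_zero)

open Real in
/-- the character `q` -/
def qChar : contChars (Multiplicative (LamZN N k)) :=
  charOf N k (2 * π) 0
    (by rw [show (0:ℝ) * N = 0 by ring]; exact Circle.exp_zero)
    (by
      rw [show 2*π + (0:ℝ)*k = ((1:ℤ):ℝ)*(2*π) by push_cast; ring]
      exact Circle.exp_int_mul_two_pi 1)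

open Real

lemma xkChar_apply (hN : 1 ≤ N) (a : ℤ) (t : ℝ) :
    ((xkChar N k hN : Multiplicative (LamZN N k) →* Circle))
      (Multiplicative.ofAdd (QuotientAddGroup.mk (a, t)))
      = Circle.exp (2 * π * ((k : ℝ) * t - (a : ℝ)) / (N : ℝ)) := by
  rw [xkChar, charOf_apply]
  congr 1
  ring

lemma qChar_apply (a : ℤ) (t : ℝ) :
    ((qChar N k : Multiplicative (LamZN N k) →* Circle))
      (Multiplicative.ofAdd (QuotientAddGroup.mk (a, t)))
      = Circle.exp (2 * π * t) := by
  rw [qChar, charOf_apply]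
  congr 1
  ring

lemma forall_char_apply (χ ζ : contChars (Multiplicative (LamZN N k)))
    (h : ∀ p : ℤ × ℝ, (χ : Multiplicative (LamZN N k) →* Circle)
        (Multiplicative.ofAdd (QuotientAddGroup.mk p))
      = (ζ : Multiplicative (LamZN N k) →* Circle)
        (Multiplicative.ofAdd (QuotientAddGroup.mk p))) : χ = ζ := by
  apply Subtype.ext
  apply MonoidHom.ext
  intro x
  obtain ⟨p, hp⟩ := QuotientAddGroup.mk_surjective (Multiplicative.toAdd x)
  have hx : Multiplicative.ofAdd (QuotientAddGroup.mk p) = x := by rw [hp]; rfl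
  rw [← hx]
  exact h p

/-- value of a general word `xk^m * q^j` -/
lemma word_apply (hN : 1 ≤ N) (m j : ℤ) (a : ℤ) (t : ℝ) :
    ((xkChar N k hN ^ m * qChar N k ^ j : contChars (Multiplicative (LamZN N k))) :
        Multiplicative (LamZN N k) →* Circle)
      (Multiplicative.ofAdd (QuotientAddGroup.mk (a, t)))
      = Circle.exp ((m : ℝ) * (2 * π * ((k : ℝ) * t - (a : ℝ)) / (N : ℝ)) + (j:ℝ) * (2 * π * t)) := by
  have hcoe : ((xkChar N k hN ^ m * qChar N k ^ j : contChars (Multiplicative (LamZN N k))) :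
      Multiplicative (LamZN N k) →* Circle)
      = (xkChar N k hN : Multiplicative (LamZN N k) →* Circle) ^ m *
        (qChar N k : Multiplicative (LamZN N k) →* Circle) ^ j := by
    push_cast
    rfl
  rw [hcoe, mhom_mul_apply, mhom_zpow_apply, mhom_zpow_apply, xkChar_apply, qChar_apply,
    circle_exp_zpow, circle_exp_zpow, ← Circle.exp_add]

lemma xk_pow_rel (hN : 1 ≤ N) :
    xkChar N k hN ^ (N : ℕ) = qChar N k ^ k := by
  have hNne : (N:ℝ) ≠ 0 := Nat.cast_ne_zero.mpr (by omega)
  apply forall_char_apply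
  intro p
  obtain ⟨a, t⟩ := p
  have hcoe1 : ((xkChar N k hN ^ (N:ℕ) : contChars (Multiplicative (LamZN N k))) :
      Multiplicative (LamZN N k) →* Circle)
      = (xkChar N k hN : Multiplicative (LamZN N k) →* Circle) ^ (N:ℕ) := by push_cast; rfl
  have hcoe2 : ((qChar N k ^ k : contChars (Multiplicative (LamZN N k))) :
      Multiplicative (LamZN N k) →* Circle)
      = (qChar N k : Multiplicative (LamZN N k) →* Circle) ^ k := by push_cast; rfl
  rw [hcoe1, hcoe2]
  have h1 : ∀ (f : Multiplicative (LamZN N k) →* Circle) (x), (f ^ (N:ℕ)) x = f x ^ (N:ℕ) :=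
    fun f x => map_pow (MonoidHom.eval x) f N
  rw [h1, mhom_zpow_apply, xkChar_apply, qChar_apply, circle_exp_npow, circle_exp_zpow]
  rw [Circle.exp_eq_exp]
  refine ⟨-a, ?_⟩
  field_simp
  push_cast
  ring

/-- classification: every continuous character is a word in xk and q -/
lemma classify (hN : 1 ≤ N) (χ : contChars (Multiplicative (LamZN N k))) :
    ∃ m j : ℤ, χ = xkChar N k hN ^ m * qChar N k ^ j := by
  have hNne : (N:ℝ) ≠ 0 := Nat.cast_ne_zero.mpr (by omega)
  set Χ := (χ : Multiplicative (LamZN N k) →* Circle) with hΧ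
  have hΧc : Continuous Χ := χ.2
  -- the restriction to ℝ
  set ψ : ℝ → Circle := fun t => Χ (Multiplicative.ofAdd (QuotientAddGroup.mk ((0:ℤ), t)))
    with hψdef
  have hψmul : ∀ s t : ℝ, ψ (s + t) = ψ s * ψ t := by
    intro s t
    rw [hψdef]
    show Χ _ = Χ _ * Χ _
    rw [← map_mul]
    congr 1
  have hψc : Continuous ψ := by
    apply hΧc.comp
    show Continuous fun t : ℝ =>
      (Multiplicative.ofAdd (QuotientAddGroup.mk ((0:ℤ), t)) : Multiplicative (LamZN N k))
    exact (continuous_quotient_mk'.comp (Continuous.prodMk_right (0:ℤ)))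
  obtain ⟨c, hc⟩ := circle_hom_exp ψ hψc hψmul
  -- value on (1,0)
  set z : Circle := Χ (Multiplicative.ofAdd (QuotientAddGroup.mk ((1:ℤ), (0:ℝ)))) with hzdef
  have hmk : ∀ a : ℤ, Χ (Multiplicative.ofAdd (QuotientAddGroup.mk (a, (0:ℝ)))) = z ^ a := by
    intro a
    rw [hzdef, ← map_zpow]
    congr 1
    show Multiplicative.ofAdd _ = _
    rw [← ofAdd_zsmul]
    congr 1
    rw [← QuotientAddGroup.mk_zsmul]
    congr 1
    simp
  have hzN : z ^ (N:ℤ) = 1 := by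
    rw [← hmk N]
    have : (QuotientAddGroup.mk (((N:ℤ), (0:ℝ))) : LamZN N k) = 0 := by
      rw [QuotientAddGroup.eq_zero_iff]
      exact AddSubgroup.subset_closure (by simp)
    rw [this]
    show Χ 1 = 1
    exact map_one Χ
  -- pick the angle of z
  set θ : ℝ := Complex.arg z with hθdef
  have hzexp : z = Circle.exp θ := (Circle.exp_arg z).symm
  -- z^N = 1 gives N θ = n (2π)
  obtain ⟨n, hn⟩ : ∃ n : ℤ, (N:ℝ) * θ = n * (2*π) := by
    have h5 : Circle.exp (((N:ℤ):ℝ) * θ) = 1 := by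
      rw [← circle_exp_zpow θ (N:ℤ), ← hzexp]
      exact hzN
    have h6 : Circle.exp ((N:ℝ) * θ) = 1 := by exact_mod_cast h5
    rwa [Circle.exp_eq_one] at h6
  -- relation from (k,1)
  have hrel : z ^ k * Circle.exp c = 1 := by
    have h1 : (QuotientAddGroup.mk ((k, (1:ℝ))) : LamZN N k) = 0 := by
      rw [QuotientAddGroup.eq_zero_iff]
      exact AddSubgroup.subset_closure (by simp)
    have h2 : Χ (Multiplicative.ofAdd (QuotientAddGroup.mk ((k, (1:ℝ))))) = 1 := by
      rw [h1]; exact map_one Χ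
    have h3 : (QuotientAddGroup.mk ((k, (1:ℝ))) : LamZN N k)
        = QuotientAddGroup.mk ((k, (0:ℝ))) + QuotientAddGroup.mk (((0:ℤ), (1:ℝ))) := by
      rw [← QuotientAddGroup.mk_add]
      congr 1
      simp
    rw [h3] at h2
    have h4 : ψ 1 = Circle.exp c := by rw [hc 1, mul_one]
    rw [← h4, ← hmk k]
    rw [← h2]
    rw [← map_mul]
    rfl
  -- derive c
  obtain ⟨j, hj⟩ : ∃ j : ℤ, (k:ℝ) * θ + c = j * (2*π) := by
    have : Circle.exp ((k:ℝ) * θ + c) = 1 := by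
      rw [Circle.exp_add, ← circle_exp_zpow θ k, ← hzexp]
      exact hrel
    rwa [Circle.exp_eq_one] at this
  refine ⟨-n, j, ?_⟩
  apply forall_char_apply
  intro p
  obtain ⟨a, t⟩ := p
  rw [word_apply]
  have hsplit : Χ (Multiplicative.ofAdd (QuotientAddGroup.mk ((a, t))))
      = z ^ a * ψ t := by
    have h3 : (QuotientAddGroup.mk ((a, t)) : LamZN N k)
        = QuotientAddGroup.mk ((a, (0:ℝ))) + QuotientAddGroup.mk (((0:ℤ), t)) := by
      rw [← QuotientAddGroup.mk_add]
      congr 1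
      simp
    rw [show (Multiplicative.ofAdd (QuotientAddGroup.mk ((a, t)) : LamZN N k)) =
        Multiplicative.ofAdd (QuotientAddGroup.mk ((a, (0:ℝ))))
        * Multiplicative.ofAdd (QuotientAddGroup.mk (((0:ℤ), t))) by
      rw [h3, ofAdd_add]]
    rw [map_mul, hmk a]
    try rfl
  show Χ _ = _
  rw [hsplit, hc t, hzexp, circle_exp_zpow, ← Circle.exp_add]
  congr 1
  -- θ = n 2π / N,  c = j 2π - k θ
  have hθ : θ = (n:ℝ) * (2*π) / N := by
    field_simp
    linarith [hn]
  have hcval : c = (j:ℝ) * (2*π) - (k:ℝ) * θ := by linarith [hj]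
  rw [hcval, hθ]
  push_cast
  field_simp
  ring



/-! ### Algebra -/

section Algebra

open Polynomial LaurentPolynomial

local notation "BB" => Polynomial (LaurentPolynomial ℤ) ⧸ relIdeal N k
local notation "mkQ" => Ideal.Quotient.mk (relIdeal N k)
local notation "GG" => contChars (Multiplicative (LamZN N k))
local notation "RR" => MonoidAlgebra ℤ (contChars (Multiplicative (LamZN N k)))

/-- the unit `q` of `B` -/
def uQ : (Polynomial (LaurentPolynomial ℤ) ⧸ relIdeal N k)ˣ :=
  Units.map ((Ideal.Quotient.mk (relIdeal N k)).comp
    (Polynomial.C : LaurentPolynomial ℤ →+* Polynomial (LaurentPolynomial ℤ))).toMonoidHom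
    (LaurentPolynomial.isUnit_T 1).unit

lemma uQ_val : ((uQ N k : (Polynomial (LaurentPolynomial ℤ) ⧸ relIdeal N k)ˣ) :
    Polynomial (LaurentPolynomial ℤ) ⧸ relIdeal N k) = mkQ (Polynomial.C (T 1)) := by
  simp [uQ]

lemma uQ_inv_val : (((uQ N k)⁻¹ : (Polynomial (LaurentPolynomial ℤ) ⧸ relIdeal N k)ˣ) :
    Polynomial (LaurentPolynomial ℤ) ⧸ relIdeal N k) = mkQ (Polynomial.C (T (-1))) := by
  apply Units.inv_eq_of_mul_eq_one_right
  rw [uQ_val, ← map_mul, ← map_mul, ← T_add]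
  norm_num

lemma uQ_zpow_val (s : ℤ) : (((uQ N k) ^ s : (Polynomial (LaurentPolynomial ℤ) ⧸ relIdeal N k)ˣ) :
    Polynomial (LaurentPolynomial ℤ) ⧸ relIdeal N k) = mkQ (Polynomial.C (T s)) := by
  induction s using Int.induction_on with
  | zero => rw [zpow_zero, Units.val_one, T_zero, map_one, map_one]
  | succ i ih =>
      rw [zpow_add_one, Units.val_mul, ih, uQ_val, ← map_mul, ← map_mul, ← T_add]
  | pred i ih =>
      rw [zpow_sub_one, Units.val_mul, ih, uQ_inv_val, ← map_mul, ← map_mul, ← T_add,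
        sub_eq_add_neg]

lemma mkX_pow : (mkQ (Polynomial.X) : Polynomial (LaurentPolynomial ℤ) ⧸ relIdeal N k) ^ N
    = mkQ (Polynomial.C (T k)) := by
  rw [← map_pow, Ideal.Quotient.mk_eq_mk_iff_sub_mem]
  exact Ideal.subset_span (Set.mem_singleton _)

instance quotDedekindFinite :
    IsDedekindFiniteMonoid (Polynomial (LaurentPolynomial ℤ) ⧸ relIdeal N k) :=
  ⟨fun {a b} h => (mul_comm b a).trans h⟩

/-- the unit `x` of `B` -/
def uX (hN : 1 ≤ N) : (Polynomial (LaurentPolynomial ℤ) ⧸ relIdeal N k)ˣ :=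
  Units.mkOfMulEqOne (mkQ Polynomial.X)
    ((mkQ Polynomial.X) ^ (N - 1) * (((uQ N k) ^ (-k) :
      (Polynomial (LaurentPolynomial ℤ) ⧸ relIdeal N k)ˣ) :
        Polynomial (LaurentPolynomial ℤ) ⧸ relIdeal N k))
    (by
      have h1 : mkQ (Polynomial.X) * (mkQ Polynomial.X) ^ (N - 1)
          = (mkQ Polynomial.X) ^ N := by
        rw [← pow_succ']
        congr 1
        omega
      calc mkQ (Polynomial.X) * ((mkQ Polynomial.X) ^ (N - 1) * (((uQ N k) ^ (-k) :
          (Polynomial (LaurentPolynomial ℤ) ⧸ relIdeal N k)ˣ) :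
            Polynomial (LaurentPolynomial ℤ) ⧸ relIdeal N k))
          = (mkQ (Polynomial.X) * (mkQ Polynomial.X) ^ (N - 1)) * (((uQ N k) ^ (-k) : _ˣ) : _) := by
            ring
      _ = ((((uQ N k) ^ k) : _ˣ) : _) * (((uQ N k) ^ (-k) : _ˣ) : _) := by
            rw [h1, mkX_pow, uQ_zpow_val, uQ_zpow_val]
      _ = (((((uQ N k) ^ k) * ((uQ N k) ^ (-k))) : _ˣ) : _) := (Units.val_mul _ _).symm
      _ = 1 := by rw [← zpow_add, add_neg_cancel, zpow_zero, Units.val_one])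

lemma uX_val (hN : 1 ≤ N) : ((uX N k hN : (Polynomial (LaurentPolynomial ℤ) ⧸ relIdeal N k)ˣ) :
    Polynomial (LaurentPolynomial ℤ) ⧸ relIdeal N k) = mkQ Polynomial.X := rfl

lemma uX_pow_rel (hN : 1 ≤ N) : (uX N k hN) ^ ((N : ℤ)) = (uQ N k) ^ k := by
  apply Units.ext
  rw [zpow_natCast, Units.val_pow_eq_pow_val, uX_val, mkX_pow, uQ_zpow_val]

instance quotUnitsCommGroup :
    CommGroup (Polynomial (LaurentPolynomial ℤ) ⧸ relIdeal N k)ˣ := by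
  exact Units.instCommGroupUnits (α := Polynomial (LaurentPolynomial ℤ) ⧸ relIdeal N k)

/-! the abstract group `Q` -/

abbrev Qgrp : Type := (ℤ × ℤ) ⧸ (AddSubgroup.closure {((N : ℤ), -k)})

/-- universal property map out of `Qgrp` -/
def wordHom {W : Type*} [CommGroup W] (g₁ g₂ : W) (hrel : g₁ ^ (N : ℤ) = g₂ ^ k) :
    Multiplicative (Qgrp N k) →* W :=
  AddMonoidHom.toMultiplicativeLeft
    (QuotientAddGroup.lift _
      (AddMonoidHom.mk' (fun p : ℤ × ℤ => Additive.ofMul (g₁ ^ p.1 * g₂ ^ p.2)) (by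
        intro p q
        simp only [Prod.fst_add, Prod.snd_add]
        rw [← ofMul_mul]
        congr 1
        rw [zpow_add, zpow_add]
        exact mul_mul_mul_comm _ _ _ _))
      (by
        rw [AddSubgroup.closure_le]
        intro x hx
        simp only [Set.mem_singleton_iff] at hx
        subst hx
        simp only [SetLike.mem_coe, AddMonoidHom.mem_ker, AddMonoidHom.mk'_apply]
        rw [show (0 : Additive W) = Additive.ofMul (1 : W) from rfl]
        congr 1
        rw [hrel, zpow_neg, mul_inv_cancel]))

lemma wordHom_apply {W : Type*} [CommGroup W] (g₁ g₂ : W) (hrel : g₁ ^ (N : ℤ) = g₂ ^ k)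
    (m j : ℤ) :
    wordHom N k g₁ g₂ hrel (Multiplicative.ofAdd (QuotientAddGroup.mk (m, j))) =
      g₁ ^ m * g₂ ^ j := rfl


lemma xk_zpow_rel (hN : 1 ≤ N) : (xkChar N k hN) ^ ((N : ℤ)) = (qChar N k) ^ k := by
  rw [zpow_natCast]; exact xk_pow_rel N k hN

/-- the canonical map from the abstract group to the character group -/
def Phi (hN : 1 ≤ N) : Multiplicative (Qgrp N k) →* contChars (Multiplicative (LamZN N k)) :=
  wordHom N k (xkChar N k hN) (qChar N k) (xk_zpow_rel N k hN)

lemma exp_pi_ne_one : Circle.exp Real.pi ≠ 1 := by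
  intro h
  rw [Circle.exp_eq_one] at h
  obtain ⟨n, hn⟩ := h
  have hπ : Real.pi ≠ 0 := Real.pi_ne_zero
  have h2 : (1 : ℝ) * Real.pi = ((2 * n : ℤ) : ℝ) * Real.pi := by push_cast; linarith [hn]
  have h3 : (1 : ℝ) = ((2 * n : ℤ) : ℝ) := mul_right_cancel₀ hπ h2
  have h4 : (1 : ℤ) = 2 * n := by exact_mod_cast h3
  omega

lemma const_zero_of_exp (c : ℝ) (h : ∀ t : ℝ, Circle.exp (c * t) = 1) : c = 0 := by
  by_contra hc
  have h1 := h (Real.pi / c)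
  rw [mul_comm, div_mul_cancel₀ _ hc] at h1
  exact exp_pi_ne_one h1

lemma Phi_injective (hN : 1 ≤ N) : Function.Injective (Phi N k hN) := by
  rw [injective_iff_map_eq_one]
  intro x hx
  obtain ⟨p, hp⟩ := QuotientAddGroup.mk_surjective (Multiplicative.toAdd x)
  obtain ⟨m, j⟩ := p
  have hx' : Multiplicative.ofAdd (QuotientAddGroup.mk ((m, j) : ℤ × ℤ)) = x := by rw [hp]; rfl
  rw [← hx'] at hx ⊢
  rw [Phi, wordHom_apply] at hx
  have hNne : (N:ℝ) ≠ 0 := Nat.cast_ne_zero.mpr (by omega)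
  have hval : ∀ (a : ℤ) (t : ℝ),
      Circle.exp ((m : ℝ) * (2 * Real.pi * ((k : ℝ) * t - (a:ℝ)) / (N:ℝ))
        + (j:ℝ) * (2 * Real.pi * t)) = 1 := by
    intro a t
    rw [← word_apply N k hN m j a t, hx]
    rfl
  obtain ⟨n1, hn1⟩ : ∃ n1 : ℤ, (m:ℝ) = n1 * N := by
    have h1 := hval (-1) 0
    rw [show (m:ℝ) * (2 * Real.pi * ((k:ℝ) * 0 - ((-1 : ℤ):ℝ)) / (N:ℝ))
        + (j:ℝ) * (2 * Real.pi * 0) = ((m:ℝ)/(N:ℝ)) * (2 * Real.pi) by push_cast; ring] at h1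
    rw [Circle.exp_eq_one] at h1
    obtain ⟨n1, hn1⟩ := h1
    refine ⟨n1, ?_⟩
    have h2π : (2 * Real.pi) ≠ 0 := by positivity
    have h3 : ((m:ℝ)/(N:ℝ)) = n1 := mul_right_cancel₀ h2π hn1
    field_simp at h3
    linarith [h3]
  have hc0 : (2 * Real.pi) * ((m:ℝ) * (k:ℝ) / (N:ℝ) + (j:ℝ)) = 0 := by
    apply const_zero_of_exp
    intro t
    rw [show (2 * Real.pi) * ((m:ℝ) * (k:ℝ) / (N:ℝ) + (j:ℝ)) * t
        = (m:ℝ) * (2 * Real.pi * ((k:ℝ) * t - ((0:ℤ):ℝ)) / (N:ℝ))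
          + (j:ℝ) * (2 * Real.pi * t) by push_cast; field_simp; ring]
    exact hval 0 t
  have h2π : (2 * Real.pi) ≠ 0 := by positivity
  have hc1 : (m:ℝ) * (k:ℝ) / (N:ℝ) + (j:ℝ) = 0 := by
    rcases mul_eq_zero.mp hc0 with h | h
    · exact absurd h h2π
    · exact h
  have hj : (j:ℝ) = -((n1:ℝ) * (k:ℝ)) := by
    rw [hn1] at hc1
    have hNpos : (0:ℝ) < (N:ℝ) := by positivity
    have h5 : (((n1:ℝ) * (k:ℝ) + (j:ℝ))) * (N:ℝ) = 0 := by
      field_simp at hc1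
      rw [hc1, zero_mul]
    rcases mul_eq_zero.mp h5 with h | h
    · linarith [h]
    · exact absurd h (ne_of_gt hNpos)
  have hm' : m = n1 * N := by exact_mod_cast hn1
  have hj' : j = -(n1 * k) := by exact_mod_cast hj
  have hmem : ((m, j) : ℤ × ℤ) ∈ AddSubgroup.closure {((N : ℤ), -k)} := by
    rw [AddSubgroup.mem_closure_singleton]
    refine ⟨n1, ?_⟩
    have : n1 • ((N : ℤ), -k) = (n1 * N, n1 * (-k)) := rfl
    rw [this]
    ext <;> simp <;> omega
  have : (QuotientAddGroup.mk ((m, j) : ℤ × ℤ) : Qgrp N k) = 0 :=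
    (QuotientAddGroup.eq_zero_iff _).mpr hmem
  rw [this]
  rfl

lemma Phi_surjective (hN : 1 ≤ N) : Function.Surjective (Phi N k hN) := by
  intro χ
  obtain ⟨m, j, hmj⟩ := classify N k hN χ
  exact ⟨Multiplicative.ofAdd (QuotientAddGroup.mk ((m, j) : ℤ × ℤ)), by
    rw [Phi, wordHom_apply]; exact hmj.symm⟩

/-- the group isomorphism -/
def PhiE (hN : 1 ≤ N) : Multiplicative (Qgrp N k) ≃* contChars (Multiplicative (LamZN N k)) :=
  MulEquiv.ofBijective (Phi N k hN) ⟨Phi_injective N k hN, Phi_surjective N k hN⟩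

lemma PhiE_apply (hN : 1 ≤ N) (m j : ℤ) :
    PhiE N k hN (Multiplicative.ofAdd (QuotientAddGroup.mk ((m, j) : ℤ × ℤ)))
      = xkChar N k hN ^ m * qChar N k ^ j :=
  wordHom_apply N k (xkChar N k hN) (qChar N k) (xk_zpow_rel N k hN) m j

/-- characters as units of the representation ring -/
def ofU : contChars (Multiplicative (LamZN N k)) →* (RR)ˣ :=
  (Units.map (MonoidAlgebra.of ℤ (contChars (Multiplicative (LamZN N k))))).comp
    (toUnits).toMonoidHom

lemma ofU_val (χ : contChars (Multiplicative (LamZN N k))) :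
    ((ofU N k χ : (RR)ˣ) : RR) = MonoidAlgebra.of ℤ (contChars (Multiplicative (LamZN N k))) χ :=
  rfl

/-- the Laurent-coefficients map into the representation ring -/
def cQ : LaurentPolynomial ℤ →+* RR :=
  ((AddMonoidAlgebra.lift ℤ (MonoidAlgebra ℤ (contChars (Multiplicative (LamZN N k)))) ℤ)
    ((Units.coeHom (MonoidAlgebra ℤ (contChars (Multiplicative (LamZN N k))))).comp
      (zpowersHom (RR)ˣ (ofU N k (qChar N k))))).toRingHom

lemma cQ_T (s : ℤ) : cQ N k (T s)
    = MonoidAlgebra.of ℤ (contChars (Multiplicative (LamZN N k))) ((qChar N k) ^ s) := by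
  show ((AddMonoidAlgebra.lift ℤ _ ℤ) _) (AddMonoidAlgebra.single s 1) = _
  rw [AddMonoidAlgebra.lift_single, one_smul]
  show ((ofU N k (qChar N k) ^ s : (RR)ˣ) : RR) = _
  rw [← map_zpow (ofU N k)]
  rfl

/-- the evaluation map from the polynomial ring -/
def Theta (hN : 1 ≤ N) : Polynomial (LaurentPolynomial ℤ) →+* RR :=
  eval₂RingHom (cQ N k)
    (MonoidAlgebra.of ℤ (contChars (Multiplicative (LamZN N k))) (xkChar N k hN))

lemma Theta_X (hN : 1 ≤ N) : Theta N k hN Polynomial.X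
    = MonoidAlgebra.of ℤ (contChars (Multiplicative (LamZN N k))) (xkChar N k hN) := by
  rw [Theta, coe_eval₂RingHom, eval₂_X]

lemma Theta_C (hN : 1 ≤ N) (p : LaurentPolynomial ℤ) :
    Theta N k hN (Polynomial.C p) = cQ N k p := by
  rw [Theta, coe_eval₂RingHom, Polynomial.eval₂_C]

lemma Theta_vanish (hN : 1 ≤ N) : ∀ a ∈ relIdeal N k, Theta N k hN a = 0 := by
  intro a ha
  obtain ⟨c, rfl⟩ := Ideal.mem_span_singleton.mp ha
  rw [map_mul]
  have hz : Theta N k hN ((Polynomial.X : Polynomial (LaurentPolynomial ℤ)) ^ N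
      - Polynomial.C (T k)) = 0 := by
    rw [map_sub, map_pow, Theta_X, Theta_C, cQ_T, ← map_pow, xk_pow_rel, sub_self]
  rw [hz, zero_mul]

/-- descends to the quotient -/
def ThetaBar (hN : 1 ≤ N) : (Polynomial (LaurentPolynomial ℤ) ⧸ relIdeal N k) →+* RR :=
  Ideal.Quotient.lift (relIdeal N k) (Theta N k hN) (Theta_vanish N k hN)

lemma ThetaBar_mk (hN : 1 ≤ N) (a : Polynomial (LaurentPolynomial ℤ)) :
    ThetaBar N k hN (mkQ a) = Theta N k hN a := rfl

/-- the inverse map -/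
def Psi (hN : 1 ≤ N) : RR →+* (Polynomial (LaurentPolynomial ℤ) ⧸ relIdeal N k) :=
  ((MonoidAlgebra.lift ℤ (Polynomial (LaurentPolynomial ℤ) ⧸ relIdeal N k)
      (contChars (Multiplicative (LamZN N k))))
    ((Units.coeHom _).comp
      ((wordHom N k (uX N k hN) (uQ N k) (uX_pow_rel N k hN)).comp
        (PhiE N k hN).symm.toMonoidHom))).toRingHom

lemma PhiE_symm_xk (hN : 1 ≤ N) :
    (PhiE N k hN).symm (xkChar N k hN)
      = Multiplicative.ofAdd (QuotientAddGroup.mk ((1, 0) : ℤ × ℤ)) := by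
  rw [MulEquiv.symm_apply_eq, PhiE_apply, zpow_one, zpow_zero, mul_one]

lemma PhiE_symm_q (hN : 1 ≤ N) :
    (PhiE N k hN).symm (qChar N k)
      = Multiplicative.ofAdd (QuotientAddGroup.mk ((0, 1) : ℤ × ℤ)) := by
  rw [MulEquiv.symm_apply_eq, PhiE_apply, zpow_one, zpow_zero, one_mul]

lemma Psi_of (hN : 1 ≤ N) (χ : contChars (Multiplicative (LamZN N k))) :
    Psi N k hN (MonoidAlgebra.of ℤ (contChars (Multiplicative (LamZN N k))) χ)
    = ((wordHom N k (uX N k hN) (uQ N k) (uX_pow_rel N k hN) ((PhiE N k hN).symm χ) :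
        (Polynomial (LaurentPolynomial ℤ) ⧸ relIdeal N k)ˣ) :
        Polynomial (LaurentPolynomial ℤ) ⧸ relIdeal N k) := by
  rw [Psi]
  show ((MonoidAlgebra.lift ℤ _ _) _) ((MonoidAlgebra.of ℤ _) χ) = _
  rw [MonoidAlgebra.lift_of]
  rfl

lemma Psi_of_xk (hN : 1 ≤ N) :
    Psi N k hN (MonoidAlgebra.of ℤ (contChars (Multiplicative (LamZN N k))) (xkChar N k hN))
      = mkQ Polynomial.X := by
  rw [Psi_of, PhiE_symm_xk, wordHom_apply, zpow_one, zpow_zero, mul_one]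
  rfl

lemma Psi_of_q (hN : 1 ≤ N) :
    Psi N k hN (MonoidAlgebra.of ℤ (contChars (Multiplicative (LamZN N k))) (qChar N k))
      = mkQ (Polynomial.C (T 1)) := by
  rw [Psi_of, PhiE_symm_q, wordHom_apply, zpow_one, zpow_zero, one_mul]
  exact uQ_val N k

/-- extensionality for ring homs out of Laurent polynomials over ℤ -/
lemma laurent_ringHom_ext {S : Type*} [Ring S] (f g : LaurentPolynomial ℤ →+* S)
    (h : f (T 1) = g (T 1)) : f = g := by
  have hTT : (T 1 : LaurentPolynomial ℤ) * T (-1) = 1 := by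
    rw [← T_add]; norm_num
  have hTT' : (T (-1) : LaurentPolynomial ℤ) * T 1 = 1 := by
    rw [← T_add]; norm_num
  have hinv : f (T (-1)) = g (T (-1)) := by
    have h2 : g (T 1) * g (T (-1)) = 1 := by rw [← map_mul, hTT, map_one]
    have h3 : f (T (-1)) * f (T 1) = 1 := by rw [← map_mul, hTT', map_one]
    calc f (T (-1)) = f (T (-1)) * (g (T 1) * g (T (-1))) := by rw [h2, mul_one]
    _ = (f (T (-1)) * f (T 1)) * g (T (-1)) := by rw [← h, mul_assoc]
    _ = g (T (-1)) := by rw [h3, one_mul]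
  have hTn : ∀ s : ℤ, f (T s) = g (T s) := by
    intro s
    induction s using Int.induction_on with
    | zero => rw [T_zero, map_one, map_one]
    | succ i ih =>
        rw [show ((i:ℤ) + 1) = (i + 1 : ℤ) from rfl, T_add, map_mul, map_mul, ih, h]
    | pred i ih =>
        rw [show (-(i:ℤ) - 1) = (-(i:ℤ) + -1 : ℤ) by ring, T_add, map_mul, map_mul, ih, hinv]
  apply AddMonoidAlgebra.ringHom_ext
  · intro b
    have hb : (AddMonoidAlgebra.single (0:ℤ) b : LaurentPolynomial ℤ) = b • 1 := by
      rw [AddMonoidAlgebra.one_def, AddMonoidAlgebra.smul_single', mul_one]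
    rw [hb, map_zsmul, map_zsmul, map_one, map_one]
  · intro a
    exact hTn a

lemma comp1 (hN : 1 ≤ N) : (Psi N k hN).comp (ThetaBar N k hN) =
    RingHom.id (Polynomial (LaurentPolynomial ℤ) ⧸ relIdeal N k) := by
  apply Ideal.Quotient.ringHom_ext
  apply Polynomial.ringHom_ext
  · intro a
    have hext := laurent_ringHom_ext
      ((((Psi N k hN).comp (ThetaBar N k hN)).comp (Ideal.Quotient.mk (relIdeal N k))).comp
        (Polynomial.C : LaurentPolynomial ℤ →+* Polynomial (LaurentPolynomial ℤ)))
      (((RingHom.id _).comp (Ideal.Quotient.mk (relIdeal N k))).comp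
        (Polynomial.C : LaurentPolynomial ℤ →+* Polynomial (LaurentPolynomial ℤ)))
      (by
        show Psi N k hN (ThetaBar N k hN (mkQ (Polynomial.C (T 1)))) = mkQ (Polynomial.C (T 1))
        rw [ThetaBar_mk, Theta_C, cQ_T, zpow_one, Psi_of_q])
    exact RingHom.congr_fun hext a
  · show Psi N k hN (ThetaBar N k hN (mkQ Polynomial.X)) = mkQ Polynomial.X
    rw [ThetaBar_mk, Theta_X, Psi_of_xk]

lemma comp2 (hN : 1 ≤ N) : (ThetaBar N k hN).comp (Psi N k hN) = RingHom.id RR := by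
  apply MonoidAlgebra.ringHom_ext
  · intro b
    have hb : (MonoidAlgebra.single (1 : contChars (Multiplicative (LamZN N k))) b : RR)
        = b • 1 := by
      rw [MonoidAlgebra.one_def, MonoidAlgebra.smul_single', mul_one]
    rw [hb, map_zsmul, map_zsmul, map_one, map_one]
  · intro χ
    show (ThetaBar N k hN) ((Psi N k hN) (MonoidAlgebra.of ℤ _ χ)) = MonoidAlgebra.of ℤ _ χ
    obtain ⟨p, hp⟩ := QuotientAddGroup.mk_surjective (Multiplicative.toAdd ((PhiE N k hN).symm χ))
    obtain ⟨m, j⟩ := p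
    have hps : Multiplicative.ofAdd (QuotientAddGroup.mk ((m, j) : ℤ × ℤ))
        = (PhiE N k hN).symm χ := by rw [hp]; rfl
    rw [Psi_of, ← hps, wordHom_apply]
    have h2 : ∀ u : (Polynomial (LaurentPolynomial ℤ) ⧸ relIdeal N k)ˣ,
        (ThetaBar N k hN) ((u : Polynomial (LaurentPolynomial ℤ) ⧸ relIdeal N k))
          = ((Units.map (ThetaBar N k hN).toMonoidHom u : (RR)ˣ) : RR) := fun u => rfl
    rw [h2, map_mul, map_zpow, map_zpow]
    have hx : Units.map (ThetaBar N k hN).toMonoidHom (uX N k hN)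
        = ofU N k (xkChar N k hN) := by
      apply Units.ext
      rw [Units.coe_map]
      show ThetaBar N k hN (mkQ Polynomial.X) = _
      rw [ThetaBar_mk, Theta_X]
      rfl
    have hq : Units.map (ThetaBar N k hN).toMonoidHom (uQ N k)
        = ofU N k (qChar N k) := by
      apply Units.ext
      rw [Units.coe_map]
      show ThetaBar N k hN ((uQ N k : _ˣ) : _) = _
      rw [uQ_val, ThetaBar_mk, Theta_C, cQ_T, zpow_one]
      rfl
    rw [hx, hq, ← map_zpow (ofU N k), ← map_zpow (ofU N k), ← map_mul (ofU N k)]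
    have h3 : xkChar N k hN ^ m * qChar N k ^ j = χ := by
      rw [← PhiE_apply N k hN m j, hps]
      exact (PhiE N k hN).apply_symm_apply χ
    rw [h3]
    rfl

/-- the ring isomorphism -/
def eIso (hN : 1 ≤ N) : RR ≃+* (Polynomial (LaurentPolynomial ℤ) ⧸ relIdeal N k) :=
  RingEquiv.ofRingHom (Psi N k hN) (ThetaBar N k hN) (comp1 N k hN) (comp2 N k hN)

lemma eIso_apply (hN : 1 ≤ N) (x : RR) : eIso N k hN x = Psi N k hN x := rfl

end Algebra

end Stmt9

theorem statement9 (N : ℕ) (hN : 1 ≤ N) (k : ℤ) :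
    ∃ xk q : contChars (Multiplicative (LamZN N k)),
      (∀ (a : ℤ) (t : ℝ),
        ((xk : Multiplicative (LamZN N k) →* Circle)
            (Multiplicative.ofAdd (QuotientAddGroup.mk (a, t)))
          = Circle.exp (2 * Real.pi * ((k : ℝ) * t - (a : ℝ)) / (N : ℝ)))) ∧
      (∀ (a : ℤ) (t : ℝ),
        ((q : Multiplicative (LamZN N k) →* Circle)
            (Multiplicative.ofAdd (QuotientAddGroup.mk (a, t)))
          = Circle.exp (2 * Real.pi * t))) ∧
      xk ^ (N : ℕ) = q ^ k ∧
      ∃ e : RepRing (Multiplicative (LamZN N k)) ≃+*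
          (Polynomial (LaurentPolynomial ℤ) ⧸ relIdeal N k),
        e (MonoidAlgebra.of ℤ (contChars (Multiplicative (LamZN N k))) xk)
            = Ideal.Quotient.mk (relIdeal N k) Polynomial.X ∧
        e (MonoidAlgebra.of ℤ (contChars (Multiplicative (LamZN N k))) q)
            = Ideal.Quotient.mk (relIdeal N k) (Polynomial.C (LaurentPolynomial.T 1)) := by
  refine ⟨Stmt9.xkChar N k hN, Stmt9.qChar N k,
    Stmt9.xkChar_apply N k hN, Stmt9.qChar_apply N k, Stmt9.xk_pow_rel N k hN,
    Stmt9.eIso N k hN, ?_, ?_⟩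
  · rw [Stmt9.eIso_apply, Stmt9.Psi_of_xk]
  · rw [Stmt9.eIso_apply, Stmt9.Psi_of_q]
end
end

section
/- Let H ≤ G be compact Lie groups, σ ∈ H torsion, λ a C_H(σ)-representation and χ an ℝ-character with λ(σ) = χ(1)·Id. Then the induced representation Ind^{Λ_G(σ)}_{Λ_H(σ)}(λ ⊙ χ) is isomorphic to (Ind^{C_G(σ)}_{C_H(σ)}λ) ⊙ χ as Λ_G(σ)-representations. -/
/-!
STATEMENT 13: Let H ≤ G be compact Lie groups, σ ∈ H torsion, λ a C_H(σ)-representation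
and χ an ℝ-character with λ(σ) = χ(1)·Id. Then
Ind^{Λ_G(σ)}_{Λ_H(σ)}(λ ⊙ χ) ≅ (Ind^{C_G(σ)}_{C_H(σ)} λ) ⊙ χ as Λ_G(σ)-representations.
Induced representations are modelled by their function-space model
{f : Γ → V | f(jb·a) = ρ(b)f(a)}; the isomorphism is a ℂ-linear equivalence T that is
equivariant: the right translation action of [c,t] ∈ Λ_G(σ) on the induced space
corresponds to χ(t) times the right translation by c ∈ C_G(σ).
-/

noncomputable section

theorem self_mem_centralizer {G : Type} [Group G] (g : G) :
    g ∈ Subgroup.centralizer ({g} : Set G) := by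
  rw [Subgroup.mem_centralizer_iff]
  rintro s hs
  rw [Set.mem_singleton_iff] at hs
  subst hs
  rfl

theorem zpowers_normal_of_central {H : Type*} [Group H] (z : H)
    (hz : ∀ x : H, Commute x z) : (Subgroup.zpowers z).Normal := by
  constructor
  intro n hn x
  obtain ⟨k, hk⟩ := Subgroup.mem_zpowers_iff.mp hn
  have hc : Commute x (z ^ k) := (hz x).zpow_right k
  rw [← hk, hc.eq, mul_inv_cancel_right]
  exact Subgroup.zpow_mem_zpowers z k

variable {G : Type} [Group G]

def lamGen (g : G) (r : ℝ) :
    Subgroup.centralizer ({g} : Set G) × Multiplicative ℝ :=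
  (⟨g, self_mem_centralizer g⟩, Multiplicative.ofAdd r)

def lamN (g : G) (r : ℝ) :
    Subgroup (Subgroup.centralizer ({g} : Set G) × Multiplicative ℝ) :=
  Subgroup.zpowers (lamGen g r)

theorem lamGen_central (g : G) (r : ℝ)
    (x : Subgroup.centralizer ({g} : Set G) × Multiplicative ℝ) :
    Commute x (lamGen g r) := by
  rcases x with ⟨⟨h, hh⟩, t⟩
  have hcomm : g * h = h * g :=
    Subgroup.mem_centralizer_iff.mp hh g (Set.mem_singleton g)
  show _ = _
  refine Prod.ext (Subtype.ext ?_) (mul_comm _ _)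
  exact hcomm.symm

instance (g : G) (r : ℝ) : (lamN g r).Normal :=
  zpowers_normal_of_central _ (lamGen_central g r)

/-- `Λ_G(g) = (C_G(g) × ℝ)/⟨(g,-1)⟩`. -/
abbrev Lam (g : G) : Type :=
  (Subgroup.centralizer ({g} : Set G) × Multiplicative ℝ) ⧸ lamN g (-1)

/-- The class of `(h, t)` in `Λ_G(g)`. -/
abbrev LamMk (g : G) (h : G) (hh : h ∈ Subgroup.centralizer ({g} : Set G)) (t : ℝ) :
    Lam g :=
  QuotientGroup.mk (⟨h, hh⟩, Multiplicative.ofAdd t)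


open scoped MatrixGroups

/-- The inclusion `C_H(σ) → C_G(σ)` for a subgroup `H = K ≤ G`. -/
def inclC (K : Subgroup G) (σ : G) (hσ : σ ∈ K) :
    Subgroup.centralizer ({(⟨σ, hσ⟩ : K)} : Set K) →* Subgroup.centralizer ({σ} : Set G) where
  toFun h := ⟨((h : K) : G), by
    rw [Subgroup.mem_centralizer_iff]
    rintro s hs
    rw [Set.mem_singleton_iff] at hs
    rw [hs]
    have h2 : (⟨σ, hσ⟩ : K) * (h : K) = (h : K) * ⟨σ, hσ⟩ :=
      Subgroup.mem_centralizer_iff.mp h.2 _ (Set.mem_singleton _)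
    simpa using congrArg Subtype.val h2⟩
  map_one' := rfl
  map_mul' _ _ := rfl

/-- The function-space model for the representation induced along `j : B → A` from the
representation `ρ` of `B`. -/
def IndSpace {A B : Type*} [Group A] [Group B] {n : ℕ} (j : B →* A)
    (ρ : B →* GL (Fin n) ℂ) : Submodule ℂ (A → (Fin n → ℂ)) where
  carrier := {f | ∀ (b : B) (a : A),
    f (j b * a) = Matrix.mulVec ((ρ b : GL (Fin n) ℂ) : Matrix (Fin n) (Fin n) ℂ) (f a)}
  zero_mem' := by
    intro b a
    simp [Matrix.mulVec_zero]
  add_mem' := by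
    intro f g hf hg b a
    simp [hf b a, hg b a, Matrix.mulVec_add]
  smul_mem' := by
    intro c f hf b a
    simp [hf b a, Matrix.mulVec_smul]

theorem statement13 [TopologicalSpace G] [IsTopologicalGroup G] [CompactSpace G]
    (K : Subgroup G) (σ : G) (hσ : σ ∈ K) (hfin : IsOfFinOrder σ) (n : ℕ)
    -- finite index hypothesis `[C_G(σ) : C_H(σ)] < ∞`
    (hfi : (inclC K σ hσ).range.index ≠ 0)
    (lam : Subgroup.centralizer ({(⟨σ, hσ⟩ : K)} : Set K) →* GL (Fin n) ℂ)
    (χ : Multiplicative ℝ →* ℂˣ)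
    (hscalar : ((lam ⟨⟨σ, hσ⟩, self_mem_centralizer _⟩ : GL (Fin n) ℂ) :
        Matrix (Fin n) (Fin n) ℂ)
      = ((χ (Multiplicative.ofAdd (1 : ℝ)) : ℂˣ) : ℂ) • (1 : Matrix (Fin n) (Fin n) ℂ))
    -- the canonical inclusion `j : Λ_H(σ) → Λ_G(σ)`
    (j : Lam (G := K) ⟨σ, hσ⟩ →* Lam σ)
    (hj : ∀ (h : K) (hh : h ∈ Subgroup.centralizer ({(⟨σ, hσ⟩ : K)} : Set K))
        (hh' : (h : G) ∈ Subgroup.centralizer ({σ} : Set G)) (t : ℝ),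
      j (LamMk (G := K) ⟨σ, hσ⟩ h hh t) = LamMk σ (h : G) hh' t)
    -- `ρH = λ ⊙ χ` on `Λ_H(σ)`
    (ρH : Lam (G := K) ⟨σ, hσ⟩ →* GL (Fin n) ℂ)
    (hρH : ∀ (h : K) (hh : h ∈ Subgroup.centralizer ({(⟨σ, hσ⟩ : K)} : Set K)) (t : ℝ),
      ((ρH (LamMk (G := K) ⟨σ, hσ⟩ h hh t) : GL (Fin n) ℂ) : Matrix (Fin n) (Fin n) ℂ)
        = ((χ (Multiplicative.ofAdd t) : ℂˣ) : ℂ) •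
            ((lam ⟨h, hh⟩ : GL (Fin n) ℂ) : Matrix (Fin n) (Fin n) ℂ)) :
    -- `Ind^{Λ_G(σ)}_{Λ_H(σ)}(λ ⊙ χ) ≅ (Ind^{C_G(σ)}_{C_H(σ)} λ) ⊙ χ`
    ∃ T : IndSpace j ρH ≃ₗ[ℂ] IndSpace (inclC K σ hσ) lam,
      ∀ (f g : IndSpace j ρH) (c : G) (hc : c ∈ Subgroup.centralizer ({σ} : Set G)) (t : ℝ),
        (∀ y : Lam σ, (g : Lam σ → (Fin n → ℂ)) y
            = (f : Lam σ → (Fin n → ℂ)) (y * LamMk σ c hc t)) →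
        ∀ x : Subgroup.centralizer ({σ} : Set G),
          (T g : Subgroup.centralizer ({σ} : Set G) → (Fin n → ℂ)) x
            = ((χ (Multiplicative.ofAdd t) : ℂˣ) : ℂ) •
                (T f : Subgroup.centralizer ({σ} : Set G) → (Fin n → ℂ)) (x * ⟨c, hc⟩) := by
  
  classical
  have hσ'mem : σ ∈ Subgroup.centralizer ({σ} : Set G) := self_mem_centralizer σ
  set σ' : Subgroup.centralizer ({σ} : Set G) := ⟨σ, hσ'mem⟩ with hσ'
  set σK : Subgroup.centralizer ({(⟨σ, hσ⟩ : K)} : Set K) :=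
    ⟨⟨σ, hσ⟩, self_mem_centralizer _⟩ with hσK
  set u : ℂˣ := χ (Multiplicative.ofAdd (1 : ℝ)) with hu
  have hincl_σ : inclC K σ hσ σK = σ' := rfl
  have hscal : ∀ z : ℂ, Matrix.scalar (Fin n) z = z • (1 : Matrix (Fin n) (Fin n) ℂ) := by
    intro z
    ext i j
    simp [Matrix.scalar, Matrix.one_apply, Matrix.diagonal, Algebra.algebraMap_eq_smul_one]
  have hw : ∀ k : ℤ, ((lam (σK ^ k) : GL (Fin n) ℂ) : Matrix (Fin n) (Fin n) ℂ)
      = ((u ^ k : ℂˣ) : ℂ) • (1 : Matrix (Fin n) (Fin n) ℂ) := by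
    have hlam : lam σK = Units.map (Matrix.scalar (Fin n)).toMonoidHom u := by
      apply Units.ext
      rw [hscalar]
      simp [hscal]
    intro k
    rw [map_zpow, hlam, ← map_zpow, Units.coe_map]
    exact hscal _
  have hcomm : ∀ x : Subgroup.centralizer ({σ} : Set G), Commute σ' x := by
    intro x
    exact Subtype.ext (Subgroup.mem_centralizer_iff.mp x.2 σ (Set.mem_singleton σ))
  -- key well-definedness lemma
  have key : ∀ F : Subgroup.centralizer ({σ} : Set G) → (Fin n → ℂ),
      F ∈ IndSpace (inclC K σ hσ) lam →
      ∀ p q : Subgroup.centralizer ({σ} : Set G) × Multiplicative ℝ,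
      (QuotientGroup.mk p : Lam σ) = QuotientGroup.mk q →
      ((χ p.2 : ℂˣ) : ℂ) • F p.1 = ((χ q.2 : ℂˣ) : ℂ) • F q.1 := by
    intro F hF p q hpq
    rw [QuotientGroup.eq] at hpq
    obtain ⟨k, hk⟩ := Subgroup.mem_zpowers_iff.mp hpq
    have hq : q = p * (lamGen σ (-1)) ^ k := by
      rw [hk, mul_inv_cancel_left]
    have hgen : lamGen σ (-1) = (σ', Multiplicative.ofAdd (-1 : ℝ)) := rfl
    have hq1 : q.1 = p.1 * σ' ^ k := by rw [hq, hgen]; rfl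
    have hq2 : q.2 = p.2 * (Multiplicative.ofAdd (-1 : ℝ)) ^ k := by
      rw [hq, hgen]; rfl
    have hFq : F q.1 = ((u ^ k : ℂˣ) : ℂ) • F p.1 := by
      have h1 : q.1 = inclC K σ hσ (σK ^ k) * p.1 := by
        rw [hq1, map_zpow, hincl_σ, ← ((hcomm p.1).zpow_left k).eq]
      rw [h1, hF (σK ^ k) p.1, hw k, Matrix.smul_mulVec, Matrix.one_mulVec]
    have hχq : (χ q.2 : ℂ) = (χ p.2 : ℂ) * (((u ^ k : ℂˣ) : ℂ))⁻¹ := by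
      have hm1 : Multiplicative.ofAdd (-1 : ℝ) = (Multiplicative.ofAdd (1 : ℝ))⁻¹ :=
        ofAdd_neg 1
      rw [hq2, map_mul, Units.val_mul]
      congr 1
      rw [hm1, inv_zpow, map_inv, map_zpow, ← hu, Units.val_inv_eq_inv_val]
    rw [hFq, hχq, smul_smul, mul_assoc, inv_mul_cancel₀ (Units.ne_zero _), mul_one]
  -- shift lemma on the Λ side
  have h1mem : ((1 : K) : G) ∈ Subgroup.centralizer ({σ} : Set G) := by
    rw [OneMemClass.coe_one]; exact one_mem _
  have hshift : ∀ f : Lam σ → (Fin n → ℂ), f ∈ IndSpace j ρH →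
      ∀ (c : Subgroup.centralizer ({σ} : Set G)) (t : ℝ),
      f (QuotientGroup.mk (c, Multiplicative.ofAdd t))
        = ((χ (Multiplicative.ofAdd t) : ℂˣ) : ℂ) •
            f (QuotientGroup.mk (c, Multiplicative.ofAdd (0 : ℝ))) := by
    intro f hf c t
    have hb : (QuotientGroup.mk (c, Multiplicative.ofAdd t) : Lam σ)
        = j (LamMk (G := K) ⟨σ, hσ⟩ 1 (one_mem _) t)
          * QuotientGroup.mk (c, Multiplicative.ofAdd (0 : ℝ)) := by
      rw [hj 1 (one_mem _) h1mem t]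
      show _ = QuotientGroup.mk
        ((⟨((1 : K) : G), h1mem⟩, Multiplicative.ofAdd t)
          * (c, Multiplicative.ofAdd (0 : ℝ)))
      congr 1
      refine Prod.ext ?_ ?_
      · show c = ⟨((1 : K) : G), h1mem⟩ * c
        refine Subtype.ext ?_
        simp
      · show Multiplicative.ofAdd t = Multiplicative.ofAdd t * Multiplicative.ofAdd (0 : ℝ)
        simp
    rw [hb, hf _ _, hρH 1 (one_mem _) t]
    have hl1 : lam ⟨1, one_mem _⟩ = 1 := by
      have : (⟨1, one_mem _⟩ : Subgroup.centralizer ({(⟨σ, hσ⟩ : K)} : Set K)) = 1 := rfl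
      rw [this, map_one]
    rw [hl1]
    simp [Matrix.smul_mulVec, Matrix.one_mulVec]
  -- forward map membership
  have hmemT : ∀ f : Lam σ → (Fin n → ℂ), f ∈ IndSpace j ρH →
      (fun x : Subgroup.centralizer ({σ} : Set G) =>
        f (QuotientGroup.mk (x, Multiplicative.ofAdd (0 : ℝ))))
        ∈ IndSpace (inclC K σ hσ) lam := by
    intro f hf b a
    have hb' : ((b : K) : G) ∈ Subgroup.centralizer ({σ} : Set G) := (inclC K σ hσ b).2
    have hb : (QuotientGroup.mk (inclC K σ hσ b * a, Multiplicative.ofAdd (0 : ℝ)) : Lam σ)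
        = j (LamMk (G := K) ⟨σ, hσ⟩ b b.2 0)
          * QuotientGroup.mk (a, Multiplicative.ofAdd (0 : ℝ)) := by
      rw [hj b b.2 hb' 0]
      show _ = QuotientGroup.mk
        ((⟨((b : K) : G), hb'⟩, Multiplicative.ofAdd (0 : ℝ))
          * (a, Multiplicative.ofAdd (0 : ℝ)))
      congr 1
      refine Prod.ext rfl ?_
      show Multiplicative.ofAdd (0 : ℝ)
        = Multiplicative.ofAdd (0 : ℝ) * Multiplicative.ofAdd (0 : ℝ)
      simp
    show f _ = _
    rw [hb, hf _ _, hρH b b.2 0]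
    simp
  -- inverse map membership
  have houtq : ∀ y : Lam σ,
      (QuotientGroup.mk (Quotient.out y) : Lam σ) = y := fun y => QuotientGroup.out_eq' y
  have hmemInv : ∀ F : Subgroup.centralizer ({σ} : Set G) → (Fin n → ℂ),
      F ∈ IndSpace (inclC K σ hσ) lam →
      ∀ g : Lam σ → (Fin n → ℂ),
      (∀ p : Subgroup.centralizer ({σ} : Set G) × Multiplicative ℝ,
        g (QuotientGroup.mk p) = ((χ p.2 : ℂˣ) : ℂ) • F p.1) →
      g ∈ IndSpace j ρH := by
    intro F hF g hg b a
    induction b using QuotientGroup.induction_on with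
    | H pb =>
    induction a using QuotientGroup.induction_on with
    | H pa =>
    have hbh' : ((pb.1 : K) : G) ∈ Subgroup.centralizer ({σ} : Set G) :=
      (inclC K σ hσ pb.1).2
    have hbrep : (QuotientGroup.mk pb : Lam (G := K) ⟨σ, hσ⟩)
        = LamMk (G := K) ⟨σ, hσ⟩ pb.1 pb.1.2 (Multiplicative.toAdd pb.2) := by
      show _ = QuotientGroup.mk _
      congr 1
    have hmul : j (QuotientGroup.mk pb) * (QuotientGroup.mk pa : Lam σ)
        = QuotientGroup.mk ((⟨((pb.1 : K) : G), hbh'⟩, pb.2) * pa) := by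
      rw [hbrep, hj pb.1 pb.1.2 hbh', ← QuotientGroup.mk_mul]
      rfl
    have hrhs : ((ρH (QuotientGroup.mk pb) : GL (Fin n) ℂ) : Matrix (Fin n) (Fin n) ℂ)
        = ((χ pb.2 : ℂˣ) : ℂ) •
            ((lam ⟨pb.1, pb.1.2⟩ : GL (Fin n) ℂ) : Matrix (Fin n) (Fin n) ℂ) := by
      rw [hbrep, hρH pb.1 pb.1.2]
      simp
    rw [hmul, hg, hg, hrhs]
    have hFmul : F (((⟨((pb.1 : K) : G), hbh'⟩, pb.2) :
          Subgroup.centralizer ({σ} : Set G) × Multiplicative ℝ) * pa).1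
        = Matrix.mulVec ((lam ⟨pb.1, pb.1.2⟩ : GL (Fin n) ℂ) : Matrix (Fin n) (Fin n) ℂ)
            (F pa.1) := by
      have h5 : (((⟨((pb.1 : K) : G), hbh'⟩, pb.2) :
            Subgroup.centralizer ({σ} : Set G) × Multiplicative ℝ) * pa).1
          = inclC K σ hσ ⟨pb.1, pb.1.2⟩ * pa.1 := rfl
      rw [h5, hF ⟨pb.1, pb.1.2⟩ pa.1]
    rw [hFmul]
    have hχmul : ((χ (((⟨((pb.1 : K) : G), hbh'⟩, pb.2) :
          Subgroup.centralizer ({σ} : Set G) × Multiplicative ℝ) * pa).2 : ℂˣ) : ℂ)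
        = ((χ pb.2 : ℂˣ) : ℂ) * ((χ pa.2 : ℂˣ) : ℂ) := by
      show ((χ (pb.2 * pa.2) : ℂˣ) : ℂ) = _
      rw [map_mul, Units.val_mul]
    rw [hχmul, Matrix.smul_mulVec, Matrix.mulVec_smul, mul_smul, smul_comm]
  -- the linear equivalence
  refine ⟨{ toFun := fun f => ⟨fun x =>
              (f : Lam σ → (Fin n → ℂ)) (QuotientGroup.mk (x, Multiplicative.ofAdd (0 : ℝ))),
              hmemT f f.2⟩
            map_add' := by intro f g; ext x i; simp
            map_smul' := by intro c f; ext x i; simp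
            invFun := fun F => ⟨fun y =>
              ((χ (Quotient.out y).2 : ℂˣ) : ℂ) •
                (F : Subgroup.centralizer ({σ} : Set G) → (Fin n → ℂ)) (Quotient.out y).1,
              hmemInv F F.2 _ (fun p => key F F.2 _ p (houtq _))⟩
            left_inv := ?_
            right_inv := ?_ }, ?_⟩
  · intro f
    refine Subtype.ext (funext fun y => ?_)
    show ((χ (Quotient.out y).2 : ℂˣ) : ℂ) •
        (f : Lam σ → (Fin n → ℂ))
          (QuotientGroup.mk ((Quotient.out y).1, Multiplicative.ofAdd (0 : ℝ))) = _
    conv_rhs => rw [← houtq y]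
    exact (hshift (f : Lam σ → (Fin n → ℂ)) f.2 (Quotient.out y).1
      (Multiplicative.toAdd (Quotient.out y).2)).symm
  · intro F
    refine Subtype.ext (funext fun x => ?_)
    show ((χ (Quotient.out (QuotientGroup.mk
        ((x : Subgroup.centralizer ({σ} : Set G)), Multiplicative.ofAdd (0 : ℝ)) : Lam σ)).2 : ℂˣ) : ℂ) •
        (F : Subgroup.centralizer ({σ} : Set G) → (Fin n → ℂ)) _ = _
    rw [key (F : Subgroup.centralizer ({σ} : Set G) → (Fin n → ℂ)) F.2 _
      ((x : Subgroup.centralizer ({σ} : Set G)), Multiplicative.ofAdd (0 : ℝ)) (houtq _)]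
    simp
  · intro f g c hc t hrel x
    show (g : Lam σ → (Fin n → ℂ)) (QuotientGroup.mk (x, Multiplicative.ofAdd (0 : ℝ)))
      = ((χ (Multiplicative.ofAdd t) : ℂˣ) : ℂ) •
        (f : Lam σ → (Fin n → ℂ)) (QuotientGroup.mk (x * ⟨c, hc⟩, Multiplicative.ofAdd (0 : ℝ)))
    rw [hrel]
    have h7 : (QuotientGroup.mk (x, Multiplicative.ofAdd (0 : ℝ)) : Lam σ) * LamMk σ c hc t
        = QuotientGroup.mk (x * ⟨c, hc⟩, Multiplicative.ofAdd t) := by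
      rw [← QuotientGroup.mk_mul]
      congr 1
      refine Prod.ext rfl ?_
      show Multiplicative.ofAdd (0 : ℝ) * Multiplicative.ofAdd t = Multiplicative.ofAdd t
      simp
    rw [h7, hshift (f : Lam σ → (Fin n → ℂ)) f.2 (x * ⟨c, hc⟩) t]
end
end
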